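/- Let G be a linearly ordered commutative group, X a set, and let K be a subgroup of the pointwise function group X → G that is a sublattice (closed under pointwise ⊔) and convex (f ≤ h ≤ g pointwise with f, g ∈ K implies h ∈ K). Let g : X → G, and suppose the principal kernel of g meets K trivially: the only h ∈ K satisfying ∃ n ∈ ℕ with |h(x)| ≤ |g(x)| ^ n for all x ∈ X is h = 1. Then Skel(K) ∪ Skel(g) = X, where Skel(K) := {x ∈ X | f(x) = 1 for all f ∈ K} and Skel(g) := {x ∈ X | g(x) = 1}. -/

import Mathlib

/-- If a kernel `K` (a convex subgroup of the function group `X → G` closed under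
pointwise `⊔`) meets the principal kernel of `g` trivially, then
`Skel K ∪ Skel g = X`. -/
theorem skel_union_eq_univ_of_trivial_inter {G X : Type*} [CommGroup G] [LinearOrder G] [IsOrderedMonoid G]
    (K : Subgroup (X → G))
    (hsup : ∀ f ∈ K, ∀ g ∈ K, f ⊔ g ∈ K)
    (hconv : ∀ f g h : X → G, f ∈ K → g ∈ K → f ≤ h → h ≤ g → h ∈ K)
    (g : X → G)
    (htriv : ∀ h ∈ K,
      (∃ n : ℕ, ∀ x : X, h x ⊔ (h x)⁻¹ ≤ (g x ⊔ (g x)⁻¹) ^ n) → h = 1) :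
    {x : X | ∀ f ∈ K, f x = 1} ∪ {x : X | g x = 1} = Set.univ := by
  ext x
  simp only [Set.mem_union, Set.mem_setOf_eq, Set.mem_univ, iff_true]
  by_contra hx
  push_neg at hx
  obtain ⟨⟨f, hfK, hfx⟩, hgx⟩ := hx
  set h : X → G := fun y => (f y ⊔ (f y)⁻¹) ⊓ (g y ⊔ (g y)⁻¹) with hh
  have h1 : ∀ y, (1 : G) ≤ h y := fun y =>
    le_inf (one_le_mabs (f y)) (one_le_mabs (g y))
  have hK : h ∈ K := by
    refine hconv 1 (f ⊔ f⁻¹) h K.one_mem (hsup f hfK f⁻¹ (K.inv_mem hfK)) h1 ?_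
    intro y; exact inf_le_left
  have heq : h = 1 := by
    refine htriv h hK ⟨1, fun y => ?_⟩
    have : (h y)⁻¹ ≤ h y := by
      have := h1 y
      calc (h y)⁻¹ ≤ 1 := by simpa using this
        _ ≤ h y := this
    rw [sup_eq_left.mpr this, pow_one]
    exact inf_le_right
  have hx1 : h x = 1 := by rw [heq]; rfl
  have : (f x ⊔ (f x)⁻¹) = 1 ∨ (g x ⊔ (g x)⁻¹) = 1 := by
    rcases le_total (f x ⊔ (f x)⁻¹) (g x ⊔ (g x)⁻¹) with hle | hle
    · left; rw [← hx1]; exact (inf_eq_left.mpr hle).symm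
    · right; rw [← hx1]; exact (inf_eq_right.mpr hle).symm
  rcases this with habs | habs
  · exact hfx (mabs_eq_one.mp habs)
  · exact hgx (mabs_eq_one.mp habs)
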